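/- Let m be an odd positive integer and d an integer, and let A, B ∈ ℚ(L). With Z(T) = A·(L^{1−d}T²)/(1−L^{1−d}T²) + B·(L^{1−d}T³)/((1−T)(1−L^{1−d}T²)) ∈ ℚ(L)[[T]] and the operator Z ↦ Z^{(m)} sending Σ aₙTⁿ to Σ a_{mn}Tⁿ, one has Z^{(m)}(T) = A·(L^{m(1−d)}T²)/(1−L^{m(1−d)}T²) + B/((1−T)(1−L^{m(1−d)}T²)) · ( L^{m(1−d)}T³ + Σ_{j=1}^{(m−1)/2} L^{(1−d)j}T + Σ_{j=(m+1)/2}^{m−1} L^{(1−d)j}T² ). -/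

import Mathlib

open PowerSeries Finset

variable {K : Type*} [Field K]

noncomputable def ff (u0 A B : K) (n : ℕ) : K :=
  (if n % 2 = 0 ∧ n ≠ 0 then A * u0 ^ (n / 2) else 0)
    + B * ∑ j ∈ Finset.Ioc 0 ((n - 1) / 2), u0 ^ j

lemma shift_sum (u : K) (k c e : ℕ) :
    u ^ k * ∑ j ∈ Finset.Ioc c e, u ^ j = ∑ j ∈ Finset.Ioc (c + k) (e + k), u ^ j := by
  rw [← Finset.map_add_right_Ioc, Finset.sum_map, Finset.mul_sum]
  simp [pow_add, mul_comm]

lemma coeff_mul_X'' (F : PowerSeries K) (n : ℕ) :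
    PowerSeries.coeff (R := K) n (F * X) = if 1 ≤ n then PowerSeries.coeff (R := K) (n - 1) F else 0 := by
  rw [show (F * X : PowerSeries K) = F * X ^ 1 by ring, coeff_mul_X_pow']

lemma coeff_aux (F : PowerSeries K) (u : K) (n : ℕ) :
    PowerSeries.coeff (R := K) n (F * ((1 - PowerSeries.C (R := K) u * X ^ 2) * (1 - X))) =
      PowerSeries.coeff (R := K) n F - (if 1 ≤ n then PowerSeries.coeff (R := K) (n - 1) F else 0)
        - u * (if 2 ≤ n then PowerSeries.coeff (R := K) (n - 2) F else 0)
        + u * (if 3 ≤ n then PowerSeries.coeff (R := K) (n - 3) F else 0) := by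
  have h : F * ((1 - PowerSeries.C (R := K) u * X ^ 2) * (1 - X))
      = F - F * X - PowerSeries.C (R := K) u * (F * X ^ 2) + PowerSeries.C (R := K) u * (F * X ^ 3) := by
    ring
  rw [h]
  simp [coeff_mul_X_pow', coeff_mul_X'', PowerSeries.coeff_C_mul, mul_ite]

lemma key (u0 A B : K) (M N : ℕ) (hM : M % 2 = 1) (h3 : 3 * M < N) :
    ff u0 A B N - ff u0 A B (N - M) - u0 ^ M * ff u0 A B (N - 2 * M)
      + u0 ^ M * ff u0 A B (N - 3 * M) = 0 := by
  unfold ff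
  have h1 : (∑ j ∈ Ioc 0 ((N - 3*M - 1)/2), u0^j) + ∑ j ∈ Ioc ((N - 3*M - 1)/2) ((N - 2*M - 1)/2), u0^j
      = ∑ j ∈ Ioc 0 ((N - 2*M - 1)/2), u0^j :=
    Finset.sum_Ioc_consecutive _ (by omega) (by omega)
  have h2 : (∑ j ∈ Ioc 0 ((N - M - 1)/2), u0^j) + ∑ j ∈ Ioc ((N - M - 1)/2) ((N - 1)/2), u0^j
      = ∑ j ∈ Ioc 0 ((N - 1)/2), u0^j :=
    Finset.sum_Ioc_consecutive _ (by omega) (by omega)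
  have hsh : u0 ^ M * ∑ j ∈ Ioc ((N - 3*M - 1)/2) ((N - 2*M - 1)/2), u0^j
      = ∑ j ∈ Ioc ((N - 3*M - 1)/2 + M) ((N - 2*M - 1)/2 + M), u0^j := shift_sum ..
  rw [show (N - 3*M - 1)/2 + M = (N - M - 1)/2 by omega,
      show (N - 2*M - 1)/2 + M = (N - 1)/2 by omega] at hsh
  rcases Nat.even_or_odd N with hN | hN
  · rw [Nat.even_iff] at hN
    rw [if_pos ⟨hN, by omega⟩, if_neg (by omega), if_pos ⟨by omega, by omega⟩, if_neg (by omega),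
        show N / 2 = M + (N - 2*M)/2 by omega, pow_add]
    linear_combination -B * h2 + B * u0 ^ M * h1 - B * hsh
  · rw [Nat.odd_iff] at hN
    rw [if_neg (by omega), if_pos ⟨by omega, by omega⟩, if_neg (by omega), if_pos ⟨by omega, by omega⟩,
        show (N - M) / 2 = M + (N - 3*M)/2 by omega, pow_add]
    linear_combination -B * h2 + B * u0 ^ M * h1 - B * hsh

lemma coeff_rhs (a b c e : K) (n : ℕ) :
    PowerSeries.coeff (R := K) n (PowerSeries.C (R := K) a * X ^ 2 - PowerSeries.C (R := K) a * X ^ 3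
        + PowerSeries.C (R := K) b * X ^ 3 + PowerSeries.C (R := K) c * X + PowerSeries.C (R := K) e * X ^ 2)
      = if n = 1 then c else if n = 2 then a + e else if n = 3 then b - a else 0 := by
  simp only [map_add, map_sub, PowerSeries.coeff_C_mul, PowerSeries.coeff_X_pow,
    PowerSeries.coeff_X]
  rcases n with _|_|_|_|n <;> split_ifs <;> first | ring1 | (exfalso; first | assumption | omega)

lemma main' (u0 A B : K) (m : ℕ) (hm : 0 < m) (hmo : m % 2 = 1) :
    (PowerSeries.mk fun i => ff u0 A B (m * i))
        * ((1 - PowerSeries.C (R := K) (u0 ^ m) * X ^ 2) * (1 - X))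
      = PowerSeries.C (R := K) A * (PowerSeries.C (R := K) (u0 ^ m) * X ^ 2) * (1 - X)
        + PowerSeries.C (R := K) B * (PowerSeries.C (R := K) (u0 ^ m) * X ^ 3
            + PowerSeries.C (R := K) (∑ j ∈ Finset.Ioc 0 ((m - 1) / 2), u0 ^ j) * X
            + PowerSeries.C (R := K) (∑ j ∈ Finset.Ioc ((m - 1) / 2) (m - 1), u0 ^ j) * X ^ 2) := by
  have hff0 : ff u0 A B 0 = 0 := by
    simp [ff]
  have hff1 : ff u0 A B m = B * ∑ j ∈ Ioc 0 ((m - 1) / 2), u0 ^ j := by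
    unfold ff
    rw [if_neg (by omega)]
    ring
  have hff2 : ff u0 A B (m * 2) = A * u0 ^ m + B * ∑ j ∈ Ioc 0 (m - 1), u0 ^ j := by
    unfold ff
    rw [if_pos ⟨by omega, by omega⟩, show m * 2 / 2 = m by omega,
      show (m * 2 - 1) / 2 = m - 1 by omega]
  have hff3 : ff u0 A B (m * 3) = B * ∑ j ∈ Ioc 0 ((m - 1) / 2 + m), u0 ^ j := by
    unfold ff
    rw [if_neg (by omega), show (m * 3 - 1) / 2 = (m - 1) / 2 + m by omega]
    ring
  have hR : PowerSeries.C (R := K) A * (PowerSeries.C (R := K) (u0 ^ m) * X ^ 2) * (1 - X)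
        + PowerSeries.C (R := K) B * (PowerSeries.C (R := K) (u0 ^ m) * X ^ 3
            + PowerSeries.C (R := K) (∑ j ∈ Finset.Ioc 0 ((m - 1) / 2), u0 ^ j) * X
            + PowerSeries.C (R := K) (∑ j ∈ Finset.Ioc ((m - 1) / 2) (m - 1), u0 ^ j) * X ^ 2)
      = PowerSeries.C (R := K) (A * u0 ^ m) * X ^ 2 - PowerSeries.C (R := K) (A * u0 ^ m) * X ^ 3
        + PowerSeries.C (R := K) (B * u0 ^ m) * X ^ 3
        + PowerSeries.C (R := K) (B * ∑ j ∈ Finset.Ioc 0 ((m - 1) / 2), u0 ^ j) * X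
        + PowerSeries.C (R := K) (B * ∑ j ∈ Finset.Ioc ((m - 1) / 2) (m - 1), u0 ^ j) * X ^ 2 := by
    simp only [map_mul]
    ring
  rw [hR]
  ext n
  rw [coeff_aux, coeff_rhs]
  simp only [coeff_mk]
  match n with
  | 0 => norm_num [hff0]
  | 1 => norm_num [hff0, hff1]
  | 2 =>
    norm_num [hff0, hff1, hff2]
    have h1 : (∑ j ∈ Ioc 0 ((m-1)/2), u0^j) + ∑ j ∈ Ioc ((m-1)/2) (m-1), u0^j
        = ∑ j ∈ Ioc 0 (m-1), u0^j := Finset.sum_Ioc_consecutive _ (by omega) (by omega)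
    linear_combination -B * h1
  | 3 =>
    norm_num [hff0, hff1, hff2, hff3]
    have h1 : (∑ j ∈ Ioc 0 (m-1), u0^j) + ∑ j ∈ Ioc (m-1) ((m-1)/2 + m), u0^j
        = ∑ j ∈ Ioc 0 ((m-1)/2 + m), u0^j := Finset.sum_Ioc_consecutive _ (by omega) (by omega)
    have h2 : (∑ j ∈ Ioc (m-1) m, u0^j) + ∑ j ∈ Ioc m ((m-1)/2 + m), u0^j
        = ∑ j ∈ Ioc (m-1) ((m-1)/2 + m), u0^j := Finset.sum_Ioc_consecutive _ (by omega) (by omega)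
    have h3 : (∑ j ∈ Ioc (m-1) m, u0^j) = u0 ^ m := by
      rw [show Ioc (m-1) m = {m} by ext x; simp; omega, Finset.sum_singleton]
    have h4 : u0 ^ m * ∑ j ∈ Ioc 0 ((m-1)/2), u0^j = ∑ j ∈ Ioc (0 + m) ((m-1)/2 + m), u0^j :=
      shift_sum ..
    rw [zero_add] at h4
    linear_combination -B * h1 - B * h2 + B * h3 - B * h4
  | (k+4) =>
    rw [if_pos (by omega : 1 ≤ k+4), if_pos (by omega : 2 ≤ k+4), if_pos (by omega : 3 ≤ k+4),
      if_neg (by omega : ¬(k+4 = 1)), if_neg (by omega : ¬(k+4 = 2)), if_neg (by omega : ¬(k+4 = 3)),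
      show k+4-1 = k+3 by omega, show k+4-2 = k+2 by omega, show k+4-3 = k+1 by omega]
    have h4 : m * (k+3) = m * (k+4) - m := by
      have : m * (k+4) = m * (k+3) + m := by ring
      omega
    have h5 : m * (k+2) = m * (k+4) - 2 * m := by
      have : m * (k+4) = m * (k+2) + 2 * m := by ring
      omega
    have h6 : m * (k+1) = m * (k+4) - 3 * m := by
      have : m * (k+4) = m * (k+1) + 3 * m := by ring
      omega
    have h7 : 3 * m < m * (k+4) := by
      have : m * (k+4) = m * k + 4 * m := by ring
      omega
    rw [h4, h5, h6]
    exact key u0 A B m (m * (k+4)) hmo h7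

/-- (odd modulus) Let `m` be an odd positive integer, `d` an integer,
`A, B ∈ ℚ(L)`. If `Z ∈ ℚ(L)[[T]]` satisfies
`Z = A·L^{1−d}T²/(1−L^{1−d}T²) + B·L^{1−d}T³/((1−T)(1−L^{1−d}T²))`
(stated multiplied through by the denominators), then
`Z^{(m)} = A·L^{m(1−d)}T²/(1−L^{m(1−d)}T²)
  + B/((1−T)(1−L^{m(1−d)}T²)) · (L^{m(1−d)}T³ + Σ_{j=1}^{(m−1)/2} L^{(1−d)j}T
      + Σ_{j=(m+1)/2}^{m−1} L^{(1−d)j}T²)`. -/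
theorem stmt_7 (d : ℤ) (m : ℕ) (hm : 0 < m) (hmo : Odd m)
    (A B : RatFunc ℚ) (Z : PowerSeries (RatFunc ℚ)) :
    let K := RatFunc ℚ
    let L : K := RatFunc.X
    let Cc := PowerSeries.C (R := K)
    let X : PowerSeries K := PowerSeries.X
    Z * ((1 - Cc (L ^ (1 - d)) * X ^ 2) * (1 - X))
        = Cc A * (Cc (L ^ (1 - d)) * X ^ 2) * (1 - X)
          + Cc B * (Cc (L ^ (1 - d)) * X ^ 3) →
    (PowerSeries.mk fun i => PowerSeries.coeff (R := K) (m * i) Z)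
        * ((1 - Cc (L ^ ((m : ℤ) * (1 - d))) * X ^ 2) * (1 - X))
      = Cc A * (Cc (L ^ ((m : ℤ) * (1 - d))) * X ^ 2) * (1 - X)
        + Cc B * (Cc (L ^ ((m : ℤ) * (1 - d))) * X ^ 3
            + (∑ j ∈ Finset.Icc 1 ((m - 1) / 2), Cc (L ^ ((1 - d) * (j : ℤ)))) * X
            + (∑ j ∈ Finset.Icc ((m + 1) / 2) (m - 1), Cc (L ^ ((1 - d) * (j : ℤ)))) * X ^ 2) := by
  intro K L Cc X h
  set u0 : K := L ^ (1 - d) with hu0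
  have hmo' : m % 2 = 1 := Nat.odd_iff.mp hmo
  have hv : L ^ ((m : ℤ) * (1 - d)) = u0 ^ m := by
    rw [hu0, mul_comm, zpow_mul, zpow_natCast]
  have hj : ∀ j : ℕ, L ^ ((1 - d) * (j : ℤ)) = u0 ^ j := fun j => by
    rw [hu0, zpow_mul, zpow_natCast]
  -- identify Z with the explicit series
  have h1 := main' u0 A B 1 one_pos rfl
  simp only [one_mul, pow_one, Nat.sub_self, Nat.zero_div,
    show Finset.Ioc 0 ((1 - 1) / 2 : ℕ) = ∅ by rfl,
    show Finset.Ioc ((1 - 1) / 2 : ℕ) (1 - 1) = ∅ by rfl,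
    Finset.sum_empty, map_zero, zero_mul, mul_zero, add_zero] at h1
  have hD : ((1 - Cc u0 * X ^ 2) * (1 - X)) ≠ 0 := by
    intro h0
    have := congrArg (PowerSeries.constantCoeff (R := K)) h0
    simp [X, Cc] at this
  have hZ : Z = PowerSeries.mk (ff u0 A B) := by
    refine mul_right_cancel₀ hD ?_
    rw [h, h1]
  -- rewrite sums
  have hs1 : (∑ j ∈ Finset.Icc 1 ((m - 1) / 2), Cc (L ^ ((1 - d) * (j : ℤ))))
      = Cc (∑ j ∈ Finset.Ioc 0 ((m - 1) / 2), u0 ^ j) := by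
    rw [map_sum]
    rw [show Finset.Icc 1 ((m - 1) / 2) = Finset.Ioc 0 ((m - 1) / 2) by ext x; simp; omega]
    exact Finset.sum_congr rfl fun j _ => by rw [hj]
  have hs2 : (∑ j ∈ Finset.Icc ((m + 1) / 2) (m - 1), Cc (L ^ ((1 - d) * (j : ℤ))))
      = Cc (∑ j ∈ Finset.Ioc ((m - 1) / 2) (m - 1), u0 ^ j) := by
    rw [map_sum]
    rw [show Finset.Icc ((m + 1) / 2) (m - 1) = Finset.Ioc ((m - 1) / 2) (m - 1) by
      ext x; simp; omega]
    exact Finset.sum_congr rfl fun j _ => by rw [hj]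
  rw [hv, hs1, hs2, hZ]
  simp only [PowerSeries.coeff_mk]
  exact main' u0 A B m hm hmo'
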